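/- Let X be a vector space with a complete invariant metric d satisfying d(λx, λy) ≤ λ d(x,y) for λ ∈ [0,1), and let f : [a,b] → X be Riemann integrable. Define F(t) := ∫ₐᵗ f(s) ds. Then at every point t ∈ [a,b] at which f is continuous, F is differentiable with F'(t) = f(t), i.e., d(0, F(t+s) − F(t) − s·f(t)) = o(|s|) as s → 0. -/

import Mathlib

open Set MeasureTheory

/-- A tagged partition of `[a,b]`: points `a = t 0 < t 1 < ⋯ < t n = b`
with tags `s i ∈ [t i, t (i+1)]`. -/
structure TaggedPartition (a b : ℝ) where
  n : ℕ
  t : ℕ → ℝ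
  s : ℕ → ℝ
  npos : 0 < n
  left : t 0 = a
  right : t n = b
  mono : ∀ i < n, t i < t (i + 1)
  tag_mem : ∀ i < n, s i ∈ Set.Icc (t i) (t (i + 1))

/-- The mesh of the partition is `< δ`. -/
def TaggedPartition.MeshLT {a b : ℝ} (P : TaggedPartition a b) (δ : ℝ) : Prop :=
  ∀ i < P.n, P.t (i + 1) - P.t i < δ

/-- The set of partition points of a tagged partition. -/
def TaggedPartition.points {a b : ℝ} (P : TaggedPartition a b) : Set ℝ :=
  {x | ∃ i ≤ P.n, P.t i = x}

/-- The Riemann sum `f(Δ) = Σᵢ (tᵢ₊₁ - tᵢ) • f(sᵢ)`. -/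
def riemannSum {X : Type*} [AddCommGroup X] [Module ℝ X]
    (f : ℝ → X) {a b : ℝ} (P : TaggedPartition a b) : X :=
  ∑ i ∈ Finset.range P.n, (P.t (i + 1) - P.t i) • f (P.s i)

/-- `f` has Riemann integral `x` on `[a,b]` (mesh-based definition, metric `dist`). -/
def HasRiemannIntegral {X : Type*} [MetricSpace X] [AddCommGroup X] [Module ℝ X]
    (f : ℝ → X) (a b : ℝ) (x : X) : Prop :=
  ∀ ε > 0, ∃ δ > 0, ∀ P : TaggedPartition a b, P.MeshLT δ →
    dist (riemannSum f P) x < ε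

/-- the indefinite Riemann integral is differentiable, with
derivative `f t`, at every continuity point `t` of `f`. -/
/- monotonicity of partition points -/
lemma TaggedPartition.t_le_t {a b : ℝ} (P : TaggedPartition a b) :
    ∀ j ≤ P.n, ∀ i ≤ j, P.t i ≤ P.t j := by
  intro j
  induction j with
  | zero =>
    intro _ i hi
    have : i = 0 := by omega
    rw [this]
  | succ j ih =>
    intro hj i hi
    rcases Nat.eq_or_lt_of_le hi with rfl | h
    · exact le_rfl
    · exact le_trans (ih (by omega) i (by omega)) (le_of_lt (P.mono j (by omega)))

lemma TaggedPartition.tag_in {a b : ℝ} (P : TaggedPartition a b) :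
    ∀ i < P.n, P.s i ∈ Set.Icc a b := by
  intro i hi
  obtain ⟨h1, h2⟩ := P.tag_mem i hi
  constructor
  · calc a = P.t 0 := P.left.symm
      _ ≤ P.t i := P.t_le_t i (by omega) 0 (by omega)
      _ ≤ P.s i := h1
  · calc P.s i ≤ P.t (i+1) := h2
      _ ≤ P.t P.n := P.t_le_t P.n le_rfl (i+1) (by omega)
      _ = b := P.right

/- uniform partition -/
noncomputable def unifPart (c d : ℝ) (h : c < d) (n : ℕ) (hn : 0 < n) : TaggedPartition c d where
  n := n
  t := fun i => c + i * ((d - c) / n)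
  s := fun i => c + i * ((d - c) / n)
  npos := hn
  left := by simp
  right := by field_simp; ring
  mono := by
    intro i _
    have hs : (0:ℝ) < (d - c)/n := div_pos (by linarith) (by exact_mod_cast hn)
    push_cast
    nlinarith
  tag_mem := by
    intro i _
    have hs : (0:ℝ) < (d - c)/n := div_pos (by linarith) (by exact_mod_cast hn)
    constructor
    · exact le_rfl
    · push_cast; nlinarith

lemma unifPart_mesh (c d : ℝ) (h : c < d) (n : ℕ) (hn : 0 < n) :
    ∀ i < n, (unifPart c d h n hn).t (i+1) - (unifPart c d h n hn).t i = (d - c) / n := by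
  intro i _
  simp only [unifPart]
  push_cast
  ring

lemma exists_unifPart (c d : ℝ) (h : c < d) (δ : ℝ) (hδ : 0 < δ) :
    ∃ Q : TaggedPartition c d, Q.MeshLT δ := by
  obtain ⟨n, hn⟩ := exists_nat_gt ((d - c)/δ)
  have hn0 : 0 < n := by
    by_contra hc
    have : n = 0 := by omega
    subst this
    simp at hn
    nlinarith [div_pos (by linarith : (0:ℝ) < d - c) hδ]
  refine ⟨unifPart c d h n hn0, ?_⟩
  intro i hi
  rw [unifPart_mesh c d h n hn0 i hi]
  rw [div_lt_iff₀ (by exact_mod_cast hn0)]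
  have := (div_lt_iff₀ hδ).mp hn
  linarith [mul_comm (n:ℝ) δ]

/- concatenation -/
def concatPart {a c d : ℝ} (P : TaggedPartition a c) (Q : TaggedPartition c d) :
    TaggedPartition a d where
  n := P.n + Q.n
  t := fun i => if i ≤ P.n then P.t i else Q.t (i - P.n)
  s := fun i => if i < P.n then P.s i else Q.s (i - P.n)
  npos := Nat.add_pos_left P.npos _
  left := by simp [P.left]
  right := by
    have h : ¬ (P.n + Q.n ≤ P.n) := by have := Q.npos; omega
    simp only [h, if_false]
    have : P.n + Q.n - P.n = Q.n := by omega
    rw [this, Q.right]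
  mono := by
    intro i hi
    rcases lt_or_ge i P.n with h | h
    · simp only [if_pos h.le, if_pos (by omega : i + 1 ≤ P.n)]
      exact P.mono i h
    · have h1 : ¬ (i + 1 ≤ P.n) := by omega
      rcases Nat.eq_or_lt_of_le h with heq | hlt
      · simp only [if_pos (le_of_eq heq.symm), if_neg h1]
        have : i + 1 - P.n = 1 := by omega
        rw [this, ← heq, P.right]
        have hm := Q.mono 0 Q.npos
        rw [Q.left] at hm
        exact hm
      · simp only [if_neg (by omega : ¬ i ≤ P.n), if_neg h1]
        have h2 : i + 1 - P.n = (i - P.n) + 1 := by omega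
        rw [h2]
        exact Q.mono (i - P.n) (by omega)
  tag_mem := by
    intro i hi
    rcases lt_or_ge i P.n with h | h
    · simp only [if_pos h, if_pos h.le, if_pos (by omega : i + 1 ≤ P.n)]
      exact P.tag_mem i h
    · have h1 : ¬ (i + 1 ≤ P.n) := by omega
      have h2 : i + 1 - P.n = (i - P.n) + 1 := by omega
      have ht : (if i ≤ P.n then P.t i else Q.t (i - P.n)) = Q.t (i - P.n) := by
        rcases Nat.eq_or_lt_of_le h with heq | hlt
        · simp only [if_pos (le_of_eq heq.symm), ← heq]
          have : P.n - P.n = 0 := by omega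
          rw [this, Q.left, P.right]
          simp
        · simp only [if_neg (by omega : ¬ i ≤ P.n)]
      simp only [if_neg (by omega : ¬ i < P.n), ht, if_neg h1, h2]
      exact Q.tag_mem (i - P.n) (by omega)

lemma concatPart_t_left {a c d : ℝ} (P : TaggedPartition a c) (Q : TaggedPartition c d)
    (i : ℕ) (h : i ≤ P.n) : (concatPart P Q).t i = P.t i := by
  simp only [concatPart, if_pos h]

lemma concatPart_t_right {a c d : ℝ} (P : TaggedPartition a c) (Q : TaggedPartition c d)
    (i : ℕ) (h : P.n ≤ i) : (concatPart P Q).t i = Q.t (i - P.n) := by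
  simp only [concatPart]
  rcases Nat.eq_or_lt_of_le h with heq | hlt
  · simp only [if_pos (le_of_eq heq.symm), ← heq]
    have : P.n - P.n = 0 := by omega
    rw [this, Q.left, P.right]
    simp
  · simp only [if_neg (by omega : ¬ i ≤ P.n)]

lemma concatPart_s_right {a c d : ℝ} (P : TaggedPartition a c) (Q : TaggedPartition c d)
    (i : ℕ) (h : P.n ≤ i) : (concatPart P Q).s i = Q.s (i - P.n) := by
  simp only [concatPart, if_neg (by omega : ¬ i < P.n)]

lemma concatPart_meshLT {a c d : ℝ} (P : TaggedPartition a c) (Q : TaggedPartition c d)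
    {δ : ℝ} (hP : P.MeshLT δ) (hQ : Q.MeshLT δ) : (concatPart P Q).MeshLT δ := by
  intro i hi
  have hn : (concatPart P Q).n = P.n + Q.n := rfl
  rw [hn] at hi
  rcases lt_or_ge i P.n with h | h
  · rw [concatPart_t_left P Q i h.le, concatPart_t_left P Q (i+1) (by omega)]
    exact hP i h
  · rw [concatPart_t_right P Q i h, concatPart_t_right P Q (i+1) (by omega)]
    have h2 : i + 1 - P.n = (i - P.n) + 1 := by omega
    rw [h2]
    exact hQ (i - P.n) (by omega)

lemma riemannSum_concat {X : Type*} [AddCommGroup X] [Module ℝ X] (f : ℝ → X)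
    {a c d : ℝ} (P : TaggedPartition a c) (Q : TaggedPartition c d) :
    riemannSum f (concatPart P Q) = riemannSum f P + riemannSum f Q := by
  have hn : (concatPart P Q).n = P.n + Q.n := rfl
  rw [riemannSum, hn, Finset.sum_range_add]
  congr 1
  · apply Finset.sum_congr rfl
    intro i hi
    rw [Finset.mem_range] at hi
    rw [concatPart_t_left P Q i hi.le, concatPart_t_left P Q (i+1) (by omega)]
    have : (concatPart P Q).s i = P.s i := by simp only [concatPart, if_pos hi]
    rw [this]
  · apply Finset.sum_congr rfl
    intro j hj
    rw [Finset.mem_range] at hj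
    rw [concatPart_t_right P Q (P.n + j) (by omega),
        concatPart_t_right P Q (P.n + j + 1) (by omega),
        concatPart_s_right P Q (P.n + j) (by omega)]
    have e1 : P.n + j - P.n = j := by omega
    have e2 : P.n + j + 1 - P.n = j + 1 := by omega
    rw [e1, e2]

/- distance of sums -/
lemma dist_sum_le {X : Type*} [MetricSpace X] [AddCommGroup X]
    (hinv : ∀ x y z : X, dist (x + z) (y + z) = dist x y)
    (n : ℕ) (x y : ℕ → X) :
    dist (∑ i ∈ Finset.range n, x i) (∑ i ∈ Finset.range n, y i)
      ≤ ∑ i ∈ Finset.range n, dist (x i) (y i) := by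
  induction n with
  | zero => simp
  | succ n ih =>
    rw [Finset.sum_range_succ, Finset.sum_range_succ, Finset.sum_range_succ]
    calc dist (∑ i ∈ Finset.range n, x i + x n) (∑ i ∈ Finset.range n, y i + y n)
        ≤ dist (∑ i ∈ Finset.range n, x i + x n) (∑ i ∈ Finset.range n, y i + x n)
          + dist (∑ i ∈ Finset.range n, y i + x n) (∑ i ∈ Finset.range n, y i + y n) :=
          dist_triangle _ _ _
      _ = dist (∑ i ∈ Finset.range n, x i) (∑ i ∈ Finset.range n, y i)
          + dist (x n) (y n) := by
          rw [hinv]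
          congr 1
          rw [add_comm (∑ i ∈ Finset.range n, y i) (x n),
              add_comm (∑ i ∈ Finset.range n, y i) (y n), hinv]
      _ ≤ _ := by linarith [ih]

/- key estimate -/
lemma riemannSum_close {X : Type*} [MetricSpace X] [AddCommGroup X] [Module ℝ X]
    (hinv : ∀ x y z : X, dist (x + z) (y + z) = dist x y)
    (hscale : ∀ l : ℝ, 0 ≤ l → l < 1 → ∀ x y : X, dist (l • x) (l • y) ≤ l * dist x y)
    (f : ℝ → X) (t0 ε : ℝ) {c d : ℝ}
    (Q : TaggedPartition c d) (hmesh : Q.MeshLT 1)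
    (htags : ∀ i < Q.n, dist (f (Q.s i)) (f t0) ≤ ε) :
    dist (riemannSum f Q) ((d - c) • f t0) ≤ ε * (d - c) := by
  have htel : ∑ i ∈ Finset.range Q.n, (Q.t (i+1) - Q.t i) = d - c := by
    rw [Finset.sum_range_sub, Q.left, Q.right]
  have h1 : (d - c) • f t0 = ∑ i ∈ Finset.range Q.n, (Q.t (i+1) - Q.t i) • f t0 := by
    rw [← Finset.sum_smul, htel]
  rw [riemannSum, h1]
  calc dist (∑ i ∈ Finset.range Q.n, (Q.t (i+1) - Q.t i) • f (Q.s i))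
        (∑ i ∈ Finset.range Q.n, (Q.t (i+1) - Q.t i) • f t0)
      ≤ ∑ i ∈ Finset.range Q.n,
          dist ((Q.t (i+1) - Q.t i) • f (Q.s i)) ((Q.t (i+1) - Q.t i) • f t0) :=
        dist_sum_le hinv _ _ _
    _ ≤ ∑ i ∈ Finset.range Q.n, (Q.t (i+1) - Q.t i) * ε := by
        apply Finset.sum_le_sum
        intro i hi
        rw [Finset.mem_range] at hi
        have hpos : 0 ≤ Q.t (i+1) - Q.t i := by linarith [Q.mono i hi]
        calc dist ((Q.t (i+1) - Q.t i) • f (Q.s i)) ((Q.t (i+1) - Q.t i) • f t0)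
            ≤ (Q.t (i+1) - Q.t i) * dist (f (Q.s i)) (f t0) :=
              hscale _ hpos (hmesh i hi) _ _
          _ ≤ (Q.t (i+1) - Q.t i) * ε :=
              mul_le_mul_of_nonneg_left (htags i hi) hpos
    _ = ε * (d - c) := by rw [← Finset.sum_mul, htel, mul_comm]

lemma meshLT_mono {a b : ℝ} (P : TaggedPartition a b) {δ δ' : ℝ}
    (h : P.MeshLT δ) (hle : δ ≤ δ') : P.MeshLT δ' :=
  fun i hi => lt_of_lt_of_le (h i hi) hle

theorem primitive_differentiable_at_continuity_points
    {X : Type*} [MetricSpace X] [AddCommGroup X] [Module ℝ X] [CompleteSpace X]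
    (hinv : ∀ x y z : X, dist (x + z) (y + z) = dist x y)
    (hscale : ∀ l : ℝ, 0 ≤ l → l < 1 → ∀ x y : X, dist (l • x) (l • y) ≤ l * dist x y)
    (a b : ℝ) (hab : a < b) (f : ℝ → X) (xbar : X)
    (hint : HasRiemannIntegral f a b xbar)
    (F : ℝ → X) (hFa : F a = 0)
    (hF : ∀ t ∈ Set.Ioc a b, HasRiemannIntegral f a t (F t))
    (t : ℝ) (ht : t ∈ Set.Icc a b)
    (hcont : ContinuousWithinAt f (Set.Icc a b) t) :
    ∀ ε > 0, ∃ δ > 0, ∀ s : ℝ, t + s ∈ Set.Icc a b → |s| < δ →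
      dist 0 (F (t + s) - F t - s • f t) ≤ ε * |s| := by
  have hinv' : ∀ z u v : X, dist (z + u) (z + v) = dist u v := by
    intro z u v; rw [add_comm z u, add_comm z v, hinv]
  have hrw : ∀ A B C : X, dist 0 (A - B - C) = dist (B + C) A := by
    intro A B C
    rw [← hinv 0 (A - B - C) (B + C)]
    congr 1
    · abel
    · abel
  intro ε hε
  rw [Metric.continuousWithinAt_iff] at hcont
  obtain ⟨δ₁, hδ₁, hδ₁'⟩ := hcont ε hε
  refine ⟨min δ₁ 1, by positivity, ?_⟩
  intro s hs hslt
  rw [hrw]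
  have hsδ₁ : |s| < δ₁ := lt_of_lt_of_le hslt (min_le_left _ _)
  have hs1 : |s| < 1 := lt_of_lt_of_le hslt (min_le_right _ _)
  rcases lt_trichotomy s 0 with hneg | rfl | hpos
  · -- s < 0
    have habs : |s| = -s := abs_of_neg hneg
    rw [habs]
    have hca : a ≤ t + s := hs.1
    have hct : t + s < t := by linarith
    have hta : a < t := by linarith
    -- transform goal
    have hkey : dist (F t + s • f t) (F (t + s)) = dist (F t) (F (t + s) + (-s) • f t) := by
      rw [← hinv (F t + s • f t) (F (t + s)) ((-s) • f t)]
      congr 1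
      rw [add_assoc, ← add_smul]
      simp
    rw [hkey]
    apply le_of_forall_pos_le_add
    intro η hη
    obtain ⟨δ₂, hδ₂, h2⟩ := hF t ⟨hta, ht.2⟩ (η/2) (by positivity)
    -- tags estimate on [t+s, t]
    have htagest : ∀ (Q : TaggedPartition (t+s) t), ∀ i < Q.n, dist (f (Q.s i)) (f t) ≤ ε := by
      intro Q i hi
      have hmem := Q.tag_in i hi
      have hmem' : Q.s i ∈ Set.Icc a b := ⟨by linarith [hmem.1], by linarith [hmem.2, ht.2]⟩
      apply le_of_lt
      apply hδ₁' hmem'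
      rw [Real.dist_eq]
      have := hmem.1; have := hmem.2
      rw [abs_lt]
      constructor <;> linarith [(abs_lt.mp hsδ₁).1, (abs_lt.mp hsδ₁).2]
    rcases eq_or_lt_of_le hca with heq | hac
    · -- t + s = a
      obtain ⟨Q, hQ⟩ := exists_unifPart (t+s) t hct (min δ₂ 1) (by positivity)
      have hQ2 : Q.MeshLT δ₂ := meshLT_mono Q hQ (min_le_left _ _)
      have hQ1 : Q.MeshLT 1 := meshLT_mono Q hQ (min_le_right _ _)
      have hclose := riemannSum_close hinv hscale f t ε Q hQ1 (htagest Q)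
      have hts : t - (t + s) = -s := by ring
      rw [hts] at hclose
      -- Q is a partition of [a, t] after rewriting
      have hQa : dist (riemannSum f Q) (F t) < η/2 := by
        have : (t + s) = a := heq.symm
        subst this
        exact h2 Q hQ2
      rw [← heq, hFa, zero_add]
      calc dist (F t) ((-s) • f t)
          ≤ dist (F t) (riemannSum f Q) + dist (riemannSum f Q) ((-s) • f t) :=
            dist_triangle _ _ _
        _ ≤ η/2 + ε * (-s) := by
            rw [dist_comm (F t)]
            linarith
        _ ≤ ε * (-s) + η := by linarith
    · -- a < t + s
      obtain ⟨δ₃, hδ₃, h3⟩ := hF (t+s) ⟨hac, by linarith [ht.2]⟩ (η/2) (by positivity)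
      obtain ⟨P, hP⟩ := exists_unifPart a (t+s) hac (min δ₂ δ₃) (by positivity)
      obtain ⟨Q, hQ⟩ := exists_unifPart (t+s) t hct (min δ₂ 1) (by positivity)
      have hR : (concatPart P Q).MeshLT δ₂ :=
        concatPart_meshLT P Q (meshLT_mono P hP (min_le_left _ _))
          (meshLT_mono Q hQ (min_le_left _ _))
      have hsum := riemannSum_concat f P Q
      have h2R := h2 (concatPart P Q) hR
      have h3P := h3 P (meshLT_mono P hP (min_le_right _ _))
      have hclose := riemannSum_close hinv hscale f t ε Q
        (meshLT_mono Q hQ (min_le_right _ _)) (htagest Q)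
      have hts : t - (t + s) = -s := by ring
      rw [hts] at hclose
      calc dist (F t) (F (t+s) + (-s) • f t)
          ≤ dist (F t) (riemannSum f P + riemannSum f Q)
            + dist (riemannSum f P + riemannSum f Q) (F (t+s) + riemannSum f Q)
            + dist (F (t+s) + riemannSum f Q) (F (t+s) + (-s) • f t) :=
            dist_triangle4 _ _ _ _
        _ = dist (F t) (riemannSum f (concatPart P Q))
            + dist (riemannSum f P) (F (t+s))
            + dist (riemannSum f Q) ((-s) • f t) := by
            rw [hsum, hinv, hinv']
        _ ≤ η/2 + η/2 + ε * (-s) := by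
            rw [dist_comm (F t)]
            linarith
        _ ≤ ε * (-s) + η := by linarith
  · -- s = 0
    simp
  · -- s > 0
    have habs : |s| = s := abs_of_pos hpos
    rw [habs]
    have h1 : t + s ∈ Set.Ioc a b := ⟨by linarith [ht.1], hs.2⟩
    apply le_of_forall_pos_le_add
    intro η hη
    obtain ⟨δ₂, hδ₂, h2⟩ := hF (t+s) h1 (η/2) (by positivity)
    have https : t < t + s := by linarith
    have htagest : ∀ (Q : TaggedPartition t (t+s)), ∀ i < Q.n, dist (f (Q.s i)) (f t) ≤ ε := by
      intro Q i hi
      have hmem := Q.tag_in i hi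
      have hmem' : Q.s i ∈ Set.Icc a b := ⟨by linarith [hmem.1, ht.1], by linarith [hmem.2, hs.2]⟩
      apply le_of_lt
      apply hδ₁' hmem'
      rw [Real.dist_eq, abs_lt]
      obtain ⟨hm1, hm2⟩ := hmem
      constructor <;> linarith [(abs_lt.mp hsδ₁).1, (abs_lt.mp hsδ₁).2]
    rcases eq_or_lt_of_le ht.1 with heq | hta
    · -- t = a
      subst heq
      obtain ⟨Q, hQ⟩ := exists_unifPart a (a+s) https (min δ₂ 1) (by positivity)
      have hQ2 : Q.MeshLT δ₂ := meshLT_mono Q hQ (min_le_left _ _)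
      have hclose := riemannSum_close hinv hscale f a ε Q
        (meshLT_mono Q hQ (min_le_right _ _)) (htagest Q)
      have hts : (a + s) - a = s := by ring
      rw [hts] at hclose
      have hQa : dist (riemannSum f Q) (F (a+s)) < η/2 := h2 Q hQ2
      rw [hFa, zero_add]
      calc dist (s • f a) (F (a+s))
          ≤ dist (s • f a) (riemannSum f Q) + dist (riemannSum f Q) (F (a+s)) :=
            dist_triangle _ _ _
        _ ≤ ε * s + η/2 := by
            rw [dist_comm (s • f a)]
            linarith
        _ ≤ ε * s + η := by linarith
    · -- a < t
      obtain ⟨δ₃, hδ₃, h3⟩ := hF t ⟨hta, ht.2⟩ (η/2) (by positivity)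
      obtain ⟨P, hP⟩ := exists_unifPart a t hta (min δ₂ δ₃) (by positivity)
      obtain ⟨Q, hQ⟩ := exists_unifPart t (t+s) https (min δ₂ 1) (by positivity)
      have hR : (concatPart P Q).MeshLT δ₂ :=
        concatPart_meshLT P Q (meshLT_mono P hP (min_le_left _ _))
          (meshLT_mono Q hQ (min_le_left _ _))
      have hsum := riemannSum_concat f P Q
      have h2R := h2 (concatPart P Q) hR
      have h3P := h3 P (meshLT_mono P hP (min_le_right _ _))
      have hclose := riemannSum_close hinv hscale f t ε Q
        (meshLT_mono Q hQ (min_le_right _ _)) (htagest Q)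
      have hts : (t + s) - t = s := by ring
      rw [hts] at hclose
      calc dist (F t + s • f t) (F (t+s))
          ≤ dist (F t + s • f t) (riemannSum f P + s • f t)
            + dist (riemannSum f P + s • f t) (riemannSum f P + riemannSum f Q)
            + dist (riemannSum f P + riemannSum f Q) (F (t+s)) :=
            dist_triangle4 _ _ _ _
        _ = dist (F t) (riemannSum f P)
            + dist (s • f t) (riemannSum f Q)
            + dist (riemannSum f (concatPart P Q)) (F (t+s)) := by
            rw [hsum, hinv, hinv']
        _ ≤ η/2 + ε * s + η/2 := by
            rw [dist_comm (F t), dist_comm (s • f t)]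
            linarith
        _ ≤ ε * s + η := by linarith
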